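/- arXiv:1308.5782 — 2 statements merged into one kernel-verified Lean document; each statement's English description precedes it below -/
import Mathlib

section
/- The summatory function of the divisor function satisfies ∑_{n≤x} d(n) = x log x + (2γ - 1)x + O(x^{1/2}) as x → ∞, where γ is Euler's constant. -/
open Filter Asymptotics

open Finset Real

lemma innerSumAux (N a : ℕ) (ha : 1 ≤ a) :
    ∑ b ∈ Icc 1 N, (if a * b ≤ N then 1 else 0) = N / a := by
  rw [← Finset.card_filter]
  have : (Icc 1 N).filter (fun b => a * b ≤ N) = Icc 1 (N / a) := by
    ext b
    simp only [mem_filter, mem_Icc]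
    rw [Nat.le_div_iff_mul_le (by omega), mul_comm b a]
    constructor
    · rintro ⟨⟨h1, _⟩, h2⟩; exact ⟨h1, h2⟩
    · rintro ⟨h1, h2⟩
      refine ⟨⟨h1, ?_⟩, h2⟩
      calc b ≤ a * b := Nat.le_mul_of_pos_left b (by omega)
      _ ≤ N := h2
  rw [this, Nat.card_Icc, Nat.add_sub_cancel]

lemma pointwiseAux (N a b : ℕ) :
    ((if a * b ≤ N ∧ a ≤ N.sqrt then 1 else 0) + (if a * b ≤ N ∧ b ≤ N.sqrt then 1 else 0) : ℕ)
      = (if a * b ≤ N then 1 else 0) + (if a ≤ N.sqrt ∧ b ≤ N.sqrt then 1 else 0) := by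
  have h1 : a * b ≤ N → (a ≤ N.sqrt ∨ b ≤ N.sqrt) := by
    intro h
    by_contra hc
    push_neg at hc
    have hs := Nat.lt_succ_sqrt N
    have : N.sqrt.succ * N.sqrt.succ ≤ a * b := Nat.mul_le_mul hc.1 hc.2
    omega
  have h2 : a ≤ N.sqrt → b ≤ N.sqrt → a * b ≤ N :=
    fun h3 h4 => (Nat.mul_le_mul h3 h4).trans (Nat.sqrt_le N)
  by_cases hA : a ≤ N.sqrt <;> by_cases hB : b ≤ N.sqrt <;> by_cases hab : a * b ≤ N <;>
    simp [hA, hB, hab] <;> tauto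

lemma filterAux (N K : ℕ) (hK : K ≤ N) :
    (Icc 1 N).filter (· ≤ K) = Icc 1 K := by
  ext a; simp only [mem_filter, mem_Icc]; omega

lemma hyperbola (N : ℕ) :
    (∑ a ∈ Icc 1 N, N / a) + N.sqrt * N.sqrt = 2 * ∑ a ∈ Icc 1 N.sqrt, N / a := by
  set K := N.sqrt with hK
  have hKN : K ≤ N := Nat.sqrt_le_self N
  have eSA : ∑ a ∈ Icc 1 N, ∑ b ∈ Icc 1 N, (if a * b ≤ N ∧ a ≤ K then 1 else 0)
      = ∑ a ∈ Icc 1 K, N / a := by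
    have : ∀ a ∈ Icc 1 N, ∑ b ∈ Icc 1 N, (if a * b ≤ N ∧ a ≤ K then 1 else 0)
        = if a ≤ K then N / a else 0 := by
      intro a ha
      rw [mem_Icc] at ha
      by_cases h : a ≤ K
      · simp only [h, and_true, if_true]
        exact innerSumAux N a ha.1
      · simp [h]
    rw [Finset.sum_congr rfl this, ← Finset.sum_filter, filterAux N K hKN]
  have eSB : ∑ a ∈ Icc 1 N, ∑ b ∈ Icc 1 N, (if a * b ≤ N ∧ b ≤ K then 1 else 0)
      = ∑ a ∈ Icc 1 K, N / a := by
    rw [Finset.sum_comm]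
    rw [← eSA]
    refine Finset.sum_congr rfl fun b _ => Finset.sum_congr rfl fun a _ => ?_
    rw [mul_comm]
  have eSC : ∑ a ∈ Icc 1 N, ∑ b ∈ Icc 1 N, (if a ≤ K ∧ b ≤ K then 1 else 0) = K * K := by
    have hb : ∀ a : ℕ, ∑ b ∈ Icc 1 N, (if a ≤ K ∧ b ≤ K then 1 else 0)
        = if a ≤ K then K else 0 := by
      intro a
      by_cases h : a ≤ K
      · simp only [h, true_and, if_true]
        rw [← Finset.card_filter, filterAux N K hKN, Nat.card_Icc, Nat.add_sub_cancel]
      · simp [h]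
    simp_rw [hb]
    rw [← Finset.sum_filter, filterAux N K hKN, Finset.sum_const, Nat.card_Icc,
      Nat.add_sub_cancel, smul_eq_mul]
  have eT : ∑ a ∈ Icc 1 N, ∑ b ∈ Icc 1 N, (if a * b ≤ N then 1 else 0)
      = ∑ a ∈ Icc 1 N, N / a := by
    refine Finset.sum_congr rfl fun a ha => ?_
    rw [mem_Icc] at ha
    exact innerSumAux N a ha.1
  have key : (∑ a ∈ Icc 1 N, ∑ b ∈ Icc 1 N, (if a * b ≤ N ∧ a ≤ K then 1 else 0))
      + (∑ a ∈ Icc 1 N, ∑ b ∈ Icc 1 N, (if a * b ≤ N ∧ b ≤ K then 1 else 0))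
      = (∑ a ∈ Icc 1 N, ∑ b ∈ Icc 1 N, (if a * b ≤ N then 1 else 0))
      + (∑ a ∈ Icc 1 N, ∑ b ∈ Icc 1 N, (if a ≤ K ∧ b ≤ K then 1 else 0)) := by
    rw [← Finset.sum_add_distrib, ← Finset.sum_add_distrib]
    refine Finset.sum_congr rfl fun a _ => ?_
    rw [← Finset.sum_add_distrib, ← Finset.sum_add_distrib]
    exact Finset.sum_congr rfl fun b _ => pointwiseAux N a b
  rw [eSA, eSB, eT, eSC] at key
  omega

lemma div_sum_eq (N : ℕ) :
    ∑ n ∈ Icc 1 N, (n.divisors.card) = ∑ a ∈ Icc 1 N, N / a := by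
  have h1 : ∀ n ∈ Icc 1 N, n.divisors.card = ((Icc 1 N).filter (· ∣ n)).card := by
    intro n hn
    simp only [mem_Icc] at hn
    congr 1
    ext a
    simp only [Nat.mem_divisors, mem_filter, mem_Icc]
    constructor
    · rintro ⟨hd, hn0⟩
      exact ⟨⟨Nat.one_le_iff_ne_zero.2 fun h => by simp [h] at hd; omega,
        (Nat.le_of_dvd (by omega) hd).trans hn.2⟩, hd⟩
    · rintro ⟨_, hd⟩
      exact ⟨hd, by omega⟩
  rw [Finset.sum_congr rfl h1]
  simp_rw [Finset.card_filter]
  rw [Finset.sum_comm]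
  refine Finset.sum_congr rfl fun a ha => ?_
  rw [← Finset.card_filter]
  have : Icc 1 N = Ioc 0 N := rfl
  rw [this, Nat.Ioc_filter_dvd_card_eq_div]

lemma natDivErr (N a : ℕ) (ha : 1 ≤ a) :
    0 ≤ (N : ℝ) / a - ((N / a : ℕ) : ℝ) ∧ (N : ℝ) / a - ((N / a : ℕ) : ℝ) ≤ 1 := by
  have h := Nat.div_add_mod N a
  have hm : N % a < a := Nat.mod_lt _ (by omega)
  have ha' : (0 : ℝ) < a := by exact_mod_cast ha
  have hcast : (N : ℝ) = a * ((N / a : ℕ) : ℝ) + ((N % a : ℕ) : ℝ) := by exact_mod_cast h.symm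
  rw [hcast]
  rw [add_div, mul_div_cancel_left₀ _ (ne_of_gt ha')]
  constructor
  · simp only [add_sub_cancel_left]
    positivity
  · simp only [add_sub_cancel_left]
    rw [div_le_one ha']
    exact_mod_cast hm.le

lemma floorSumErr (N K : ℕ) :
    |(∑ a ∈ Icc 1 K, ((N / a : ℕ) : ℝ)) - N * (harmonic K : ℝ)| ≤ K := by
  have hh : (harmonic K : ℝ) = ∑ a ∈ Icc 1 K, (a : ℝ)⁻¹ := by
    rw [harmonic_eq_sum_Icc]; push_cast; rfl
  rw [hh, Finset.mul_sum, ← Finset.sum_sub_distrib]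
  calc |∑ a ∈ Icc 1 K, (((N / a : ℕ) : ℝ) - N * (a : ℝ)⁻¹)|
      ≤ ∑ a ∈ Icc 1 K, |((N / a : ℕ) : ℝ) - N * (a : ℝ)⁻¹| := Finset.abs_sum_le_sum_abs _ _
    _ ≤ ∑ _a ∈ Icc 1 K, (1 : ℝ) := by
        refine Finset.sum_le_sum fun a ha => ?_
        rw [mem_Icc] at ha
        have := natDivErr N a ha.1
        rw [abs_le, ← div_eq_mul_inv]
        constructor <;> linarith [this.1, this.2]
    _ = K := by simp

lemma harmonicErr (K : ℕ) (hK : 1 ≤ K) :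
    |(harmonic K : ℝ) - (Real.log K + Real.eulerMascheroniConstant)| ≤ 1 / K := by
  have hK' : (0 : ℝ) < K := by exact_mod_cast hK
  have hlo : Real.eulerMascheroniConstant < (harmonic K : ℝ) - Real.log K := by
    have := Real.eulerMascheroniConstant_lt_eulerMascheroniSeq' K
    rwa [Real.eulerMascheroniSeq', if_neg (by omega)] at this
  have hhi : (harmonic K : ℝ) - Real.log (K + 1) < Real.eulerMascheroniConstant := by
    have := Real.eulerMascheroniSeq_lt_eulerMascheroniConstant K
    rwa [Real.eulerMascheroniSeq] at this
  have hlog : Real.log (K + 1) - Real.log K ≤ 1 / K := by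
    rw [← Real.log_div (by positivity) (ne_of_gt hK')]
    have h1 : ((K : ℝ) + 1) / K = 1 + 1 / K := by field_simp
    rw [h1]
    have := Real.log_le_sub_one_of_pos (x := 1 + 1 / K) (by positivity)
    linarith
  rw [abs_le]
  constructor <;> linarith

lemma mainNat (N : ℕ) (hN : 1 ≤ N) :
    |(∑ n ∈ Icc 1 N, (n.divisors.card : ℝ)) -
      ((N : ℝ) * Real.log N + (2 * Real.eulerMascheroniConstant - 1) * N)|
      ≤ 16 * Real.sqrt N := by
  set γ := Real.eulerMascheroniConstant
  set K := N.sqrt with hKdef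
  have hK1 : 1 ≤ K := by
    have : 0 < K := Nat.sqrt_pos.2 (by omega)
    omega
  have hKr : (1 : ℝ) ≤ (K : ℝ) := by exact_mod_cast hK1
  have hKpos : (0 : ℝ) < (K : ℝ) := by linarith
  have hNr : (1 : ℝ) ≤ (N : ℝ) := by exact_mod_cast hN
  have hKsq : (K : ℝ) * K ≤ N := by exact_mod_cast Nat.sqrt_le N
  have hNlt : (N : ℝ) ≤ K * K + 2 * K := by
    have h1 := Nat.lt_succ_sqrt N
    have h2 : (K + 1) * (K + 1) = K * K + 2 * K + 1 := by ring
    have h3 : N ≤ K * K + 2 * K := by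
      rw [Nat.succ_eq_add_one, ← hKdef] at h1; omega
    exact_mod_cast h3
  -- the identity, cast to ℝ
  have hid : (∑ n ∈ Icc 1 N, (n.divisors.card : ℝ)) + (K : ℝ) * K
      = 2 * ∑ a ∈ Icc 1 K, ((N / a : ℕ) : ℝ) := by
    have h3 : (∑ n ∈ Icc 1 N, n.divisors.card) + K * K = 2 * ∑ a ∈ Icc 1 K, N / a := by
      rw [div_sum_eq N]; exact hyperbola N
    have h4 := congrArg (Nat.cast (R := ℝ)) h3
    push_cast at h4
    exact h4
  set S := ∑ n ∈ Icc 1 N, (n.divisors.card : ℝ)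
  set F := ∑ a ∈ Icc 1 K, ((N / a : ℕ) : ℝ)
  set H := (harmonic K : ℝ)
  have hF := abs_le.mp (floorSumErr N K)
  -- N*H error
  have hH : |(N : ℝ) * H - ((N : ℝ) * Real.log K + (N : ℝ) * γ)| ≤ (N : ℝ) / K := by
    have h := harmonicErr K hK1
    calc |(N : ℝ) * H - ((N : ℝ) * Real.log K + (N : ℝ) * γ)|
        = (N : ℝ) * |H - (Real.log K + γ)| := by
          rw [show (N : ℝ) * H - ((N : ℝ) * Real.log K + (N : ℝ) * γ)
              = (N : ℝ) * (H - (Real.log K + γ)) by ring, abs_mul,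
            abs_of_nonneg (by linarith : (0:ℝ) ≤ (N:ℝ))]
      _ ≤ (N : ℝ) * (1 / K) := by
          apply mul_le_mul_of_nonneg_left h (by linarith)
      _ = (N : ℝ) / K := by ring
  have hH' := abs_le.mp hH
  -- log error
  have hlog : 0 ≤ (N : ℝ) * Real.log N - 2 * ((N : ℝ) * Real.log K) ∧
      (N : ℝ) * Real.log N - 2 * ((N : ℝ) * Real.log K) ≤ 2 * ((N : ℝ) / K) := by
    have hlK : Real.log N - 2 * Real.log K = Real.log ((N : ℝ) / (K * K)) := by
      rw [Real.log_div (by linarith) (by positivity), Real.log_mul (by positivity) (by positivity)]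
      ring
    have hpos : (0 : ℝ) < (N : ℝ) / (K * K) := by positivity
    have h1 : (1 : ℝ) ≤ (N : ℝ) / (K * K) := by
      rw [le_div_iff₀ (by positivity)]; linarith
    have hub : Real.log ((N : ℝ) / (K * K)) ≤ 2 / K := by
      have := Real.log_le_sub_one_of_pos hpos
      have h2 : (N : ℝ) / (K * K) - 1 ≤ 2 / K := by
        rw [div_sub' (by positivity), div_le_div_iff₀ (by positivity) hKpos]
        nlinarith
      linarith
    have hlb : 0 ≤ Real.log ((N : ℝ) / (K * K)) := Real.log_nonneg h1
    constructor
    · have : (0:ℝ) ≤ (N : ℝ) * (Real.log N - 2 * Real.log K) := by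
        rw [hlK]; positivity
      nlinarith
    · have : (N : ℝ) * (Real.log N - 2 * Real.log K) ≤ (N : ℝ) * (2 / K) := by
        rw [hlK]
        apply mul_le_mul_of_nonneg_left hub (by linarith)
      have he : (N : ℝ) * (2 / K) = 2 * ((N : ℝ) / K) := by ring
      nlinarith
  have hNK : (N : ℝ) / K ≤ (K : ℝ) + 2 := by
    rw [div_le_iff₀ hKpos]; nlinarith
  have hsqrt : (K : ℝ) ≤ Real.sqrt N := by
    rw [show (K:ℝ) = Real.sqrt ((K:ℝ)*(K:ℝ)) by rw [Real.sqrt_mul_self (by linarith)]]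
    exact Real.sqrt_le_sqrt hKsq
  rw [abs_le]
  have hS : S = 2 * F - (K : ℝ) * K := by linarith
  constructor <;> linarith [hF.1, hF.2, hH'.1, hH'.2, hlog.1, hlog.2, hNK, hsqrt, hKr]

theorem dirichlet_divisor_asymptotic :
    (fun x : ℝ => (∑ n ∈ Finset.Icc 1 ⌊x⌋₊, (n.divisors.card : ℝ)) -
        (x * Real.log x + (2 * Real.eulerMascheroniConstant - 1) * x))
      =O[atTop] fun x : ℝ => Real.sqrt x := by
  rw [isBigO_iff]
  refine ⟨25, ?_⟩
  filter_upwards [eventually_ge_atTop (1 : ℝ)] with x hx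
  set γ := Real.eulerMascheroniConstant with hγdef
  set N := ⌊x⌋₊ with hNdef
  have hN1 : 1 ≤ N := Nat.le_floor (by exact_mod_cast hx)
  have hNx : (N : ℝ) ≤ x := Nat.floor_le (by linarith)
  have hxN : x < N + 1 := Nat.lt_floor_add_one x
  have hNr : (1 : ℝ) ≤ N := by exact_mod_cast hN1
  have hxpos : (0 : ℝ) < x := by linarith
  have main := abs_le.mp (mainNat N hN1)
  have hsq : Real.sqrt N ≤ Real.sqrt x := Real.sqrt_le_sqrt hNx
  have hsx1 : (1 : ℝ) ≤ Real.sqrt x := by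
    rw [show (1:ℝ) = Real.sqrt 1 by simp]
    exact Real.sqrt_le_sqrt hx
  have hlx : 0 ≤ Real.log x := Real.log_nonneg hx
  have hlogx2 : Real.log x ≤ 2 * Real.sqrt x := by
    have h1 : Real.log (Real.sqrt x) = Real.log x / 2 := Real.log_sqrt hxpos.le
    have h2 := Real.log_le_sub_one_of_pos (show (0:ℝ) < Real.sqrt x by positivity)
    linarith
  -- x log x - N log N bounds
  have hd : 0 ≤ x * Real.log x - (N : ℝ) * Real.log N ∧
      x * Real.log x - (N : ℝ) * Real.log N ≤ Real.log x + 1 := by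
    have hlm : Real.log N ≤ Real.log x := Real.log_le_log (by linarith) hNx
    have ha1 : (x - N) * Real.log x ≤ Real.log x := by nlinarith
    have ha0 : 0 ≤ (x - N) * Real.log x := by nlinarith
    have hb : (N : ℝ) * (Real.log x - Real.log N) ≤ x - N := by
      have hld : Real.log x - Real.log N = Real.log (x / N) :=
        (Real.log_div (by linarith) (by linarith)).symm
      have := Real.log_le_sub_one_of_pos (show (0:ℝ) < x / N by positivity)
      have h3 : (N : ℝ) * (x / N - 1) = x - N := by field_simp
      nlinarith
    have hb0 : 0 ≤ (N : ℝ) * (Real.log x - Real.log N) := by nlinarith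
    constructor <;> nlinarith
  -- γ term
  have hγ1 : (0:ℝ) < 2 * γ - 1 := by
    have := Real.one_half_lt_eulerMascheroniConstant; rw [← hγdef] at this; linarith
  have hγ2 : 2 * γ - 1 < 1 := by
    have := Real.eulerMascheroniConstant_lt_two_thirds; rw [← hγdef] at this; linarith
  have hγd : 0 ≤ (2 * γ - 1) * (x - N) ∧ (2 * γ - 1) * (x - N) ≤ 1 := by
    constructor <;> nlinarith
  rw [Real.norm_eq_abs, Real.norm_eq_abs, abs_of_nonneg (Real.sqrt_nonneg x), abs_le]
  constructor <;> nlinarith [main.1, main.2, hd.1, hd.2, hγd.1, hγd.2]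
end

section
/- For every fixed natural number f and all N ≥ 2, the shifted divisor sum satisfies ∑_{n≤N} d(n) d(n+f) ≤ C·N (log N)^2 for some constant C depending only on f. -/
set_option maxHeartbeats 1000000

lemma divisor_card_le (n : ℕ) :
    n.divisors.card ≤ 2 * ((Finset.Icc 1 n.sqrt).filter (· ∣ n)).card := by
  set S := (Finset.Icc 1 n.sqrt).filter (· ∣ n) with hS
  have hsub : n.divisors ⊆ S ∪ S.image (n / ·) := by
    intro d hd
    rw [Nat.mem_divisors] at hd
    obtain ⟨hdvd, hn⟩ := hd
    have hd0 : 0 < d := Nat.pos_of_dvd_of_pos hdvd (Nat.pos_of_ne_zero hn)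
    rcases le_or_gt d n.sqrt with h | h
    · exact Finset.mem_union_left _ (Finset.mem_filter.mpr ⟨Finset.mem_Icc.mpr ⟨hd0, h⟩, hdvd⟩)
    · refine Finset.mem_union_right _ (Finset.mem_image.mpr ⟨n / d, ?_, ?_⟩)
      · refine Finset.mem_filter.mpr ⟨Finset.mem_Icc.mpr ⟨?_, ?_⟩, Nat.div_dvd_of_dvd hdvd⟩
        · exact Nat.one_le_div_iff hd0 |>.mpr (Nat.le_of_dvd (Nat.pos_of_ne_zero hn) hdvd)
        · have : n < (n.sqrt + 1) * d := by
            calc n < (n.sqrt + 1) * (n.sqrt + 1) := Nat.lt_succ_sqrt n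
            _ ≤ (n.sqrt + 1) * d := Nat.mul_le_mul_left _ h
          exact Nat.lt_succ_iff.mp ((Nat.div_lt_iff_lt_mul hd0).mpr this)
      · exact Nat.div_div_self hdvd hn
  have h1 : n.divisors.card ≤ (S ∪ S.image (n / ·)).card := Finset.card_le_card hsub
  have h2 : (S ∪ S.image (n / ·)).card ≤ S.card + (S.image (n / ·)).card :=
    Finset.card_union_le S (S.image (n / ·))
  have h3 : (S.image (n / ·)).card ≤ S.card := Finset.card_image_le
  omega

lemma count_le (N f a b : ℕ) :
    ((Finset.Icc 1 N).filter (fun n => a ∣ n ∧ b ∣ n + f)).card ≤ N / Nat.lcm a b + 1 := by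
  classical
  set T := (Finset.Icc 1 N).filter (fun n => a ∣ n ∧ b ∣ n + f) with hT
  have hmem : ∀ n ∈ T, (1 ≤ n ∧ n ≤ N) ∧ a ∣ n ∧ b ∣ n + f := by
    intro n hn
    simpa [hT, Finset.mem_filter, Finset.mem_Icc] using hn
  have hinj : Set.InjOn (fun n => n / Nat.lcm a b) T := by
    intro n hn m hm h
    have hmod : n % (Nat.lcm a b) = m % (Nat.lcm a b) := by
      obtain ⟨_, hda, hdb⟩ := hmem n hn
      obtain ⟨_, hda', hdb'⟩ := hmem m hm
      have h1 : n ≡ m [MOD a] :=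
        (Nat.modEq_zero_iff_dvd.mpr hda).trans (Nat.modEq_zero_iff_dvd.mpr hda').symm
      have h2 : n + f ≡ m + f [MOD b] :=
        (Nat.modEq_zero_iff_dvd.mpr hdb).trans (Nat.modEq_zero_iff_dvd.mpr hdb').symm
      exact Nat.mod_lcm h1 (Nat.ModEq.add_right_cancel' f h2)
    have e1 := Nat.div_add_mod n (Nat.lcm a b)
    have e2 := Nat.div_add_mod m (Nat.lcm a b)
    have h' : n / Nat.lcm a b = m / Nat.lcm a b := h
    rw [h'] at e1
    omega
  have hmap : ∀ n ∈ T, n / (Nat.lcm a b) ∈ Finset.range (N / (Nat.lcm a b) + 1) := by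
    intro n hn
    obtain ⟨⟨_, hN⟩, _⟩ := hmem n hn
    exact Finset.mem_range.mpr (Nat.lt_succ_of_le (Nat.div_le_div_right hN))
  calc T.card ≤ (Finset.range (N / (Nat.lcm a b) + 1)).card :=
        Finset.card_le_card_of_injOn _ hmap hinj
    _ = N / (Nat.lcm a b) + 1 := Finset.card_range _

lemma gcd_dvd_of_exists (f a b n : ℕ) (ha : a ∣ n) (hb : b ∣ n + f) : Nat.gcd a b ∣ f := by
  have h1 : Nat.gcd a b ∣ n := (Nat.gcd_dvd_left a b).trans ha
  have h2 : Nat.gcd a b ∣ n + f := (Nat.gcd_dvd_right a b).trans hb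
  simpa using (Nat.dvd_sub h2 h1)

theorem shifted_divisor_sum_upper_bound (f : ℕ) (hf : 0 < f) :
    ∃ C : ℝ, 0 < C ∧ ∀ N : ℕ, 2 ≤ N →
      (∑ n ∈ Finset.Icc 1 N, (n.divisors.card * (n + f).divisors.card : ℝ)) ≤
        C * N * Real.log N ^ 2 := by
  classical
  have hlf : (0:ℝ) ≤ Real.log (f + 1) := by
    refine Real.log_nonneg ?_
    have : (0:ℝ) ≤ (f:ℝ) := Nat.cast_nonneg f
    linarith
  set c₁ : ℝ := 3 + 2 * Real.log (f + 1) with hc₁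
  have hc₁pos : 0 < c₁ := by rw [hc₁]; linarith
  refine ⟨4 * f * c₁ ^ 2 + 16 * (f + 1), by positivity, ?_⟩
  intro N hN
  set L := Real.log N with hLdef
  have h2L : 1 ≤ 2 * L := by
    have hlog2 : (0.6931471803 : ℝ) < Real.log 2 := Real.log_two_gt_d9
    have : Real.log 2 ≤ L := by
      rw [hLdef]
      exact Real.log_le_log (by norm_num) (by exact_mod_cast hN)
    linarith
  have hL0 : 0 ≤ L := by linarith
  set M := Nat.sqrt (N + f) with hMdef
  set I := Finset.Icc 1 M with hI
  set s : ℕ → ℕ := fun k => (I.filter (· ∣ k)).card with hs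
  have hsexp : ∀ k, s k = ∑ a ∈ I, if a ∣ k then 1 else 0 := fun k => Finset.card_filter _ _
  -- Step 1 (in ℕ): bound the divisor sum by 4 * double sum of counts
  have hdle : ∀ k, k ≤ N + f → k.divisors.card ≤ 2 * s k := by
    intro k hk
    refine (divisor_card_le k).trans ?_
    have hsub : (Finset.Icc 1 k.sqrt).filter (· ∣ k) ⊆ I.filter (· ∣ k) := by
      refine Finset.filter_subset_filter _ ?_
      exact Finset.Icc_subset_Icc_right (Nat.sqrt_le_sqrt hk)
    exact Nat.mul_le_mul_left 2 (Finset.card_le_card hsub)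
  have step1 : (∑ n ∈ Finset.Icc 1 N, n.divisors.card * (n + f).divisors.card)
      ≤ 4 * ∑ a ∈ I, ∑ b ∈ I,
          ((Finset.Icc 1 N).filter (fun n => a ∣ n ∧ b ∣ n + f)).card := by
    calc ∑ n ∈ Finset.Icc 1 N, n.divisors.card * (n + f).divisors.card
        ≤ ∑ n ∈ Finset.Icc 1 N, (2 * s n) * (2 * s (n + f)) := by
          refine Finset.sum_le_sum fun n hn => ?_
          have hn' := (Finset.mem_Icc.mp hn).2
          exact Nat.mul_le_mul (hdle n (by omega)) (hdle (n + f) (by omega))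
      _ = 4 * ∑ n ∈ Finset.Icc 1 N, s n * s (n + f) := by
          rw [Finset.mul_sum]; exact Finset.sum_congr rfl fun n _ => by ring
      _ = 4 * ∑ n ∈ Finset.Icc 1 N, ∑ a ∈ I, ∑ b ∈ I,
            (if a ∣ n then 1 else 0) * (if b ∣ n + f then 1 else 0) := by
          congr 1
          refine Finset.sum_congr rfl fun n _ => ?_
          rw [hsexp, hsexp, Finset.sum_mul_sum]
      _ = 4 * ∑ a ∈ I, ∑ b ∈ I, ∑ n ∈ Finset.Icc 1 N,
            (if a ∣ n then 1 else 0) * (if b ∣ n + f then 1 else 0) := by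
          congr 1
          rw [Finset.sum_comm]
          exact Finset.sum_congr rfl fun a _ => Finset.sum_comm
      _ = 4 * ∑ a ∈ I, ∑ b ∈ I,
            ((Finset.Icc 1 N).filter (fun n => a ∣ n ∧ b ∣ n + f)).card := by
          congr 1
          refine Finset.sum_congr rfl fun a _ => Finset.sum_congr rfl fun b _ => ?_
          rw [Finset.card_filter]
          refine Finset.sum_congr rfl fun n _ => ?_
          by_cases h1 : a ∣ n <;> by_cases h2 : b ∣ n + f <;> simp [h1, h2]
  -- Step 2 (in ℝ): bound each count
  have step2 : ∀ a ∈ I, ∀ b ∈ I,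
      ((((Finset.Icc 1 N).filter (fun n => a ∣ n ∧ b ∣ n + f)).card : ℝ))
        ≤ (N : ℝ) * f / (a * b) + 1 := by
    intro a ha b hb
    have ha1 : 1 ≤ a := (Finset.mem_Icc.mp ha).1
    have hb1 : 1 ≤ b := (Finset.mem_Icc.mp hb).1
    have hapos : (0:ℝ) < a := by exact_mod_cast ha1
    have hbpos : (0:ℝ) < b := by exact_mod_cast hb1
    rcases Finset.eq_empty_or_nonempty
        ((Finset.Icc 1 N).filter (fun n => a ∣ n ∧ b ∣ n + f)) with hT | ⟨n, hn⟩
    · rw [hT]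
      simp only [Finset.card_empty, Nat.cast_zero]
      positivity
    · have hmemn := Finset.mem_filter.mp hn
      have hg : Nat.gcd a b ∣ f := gcd_dvd_of_exists f a b n hmemn.2.1 hmemn.2.2
      have hgle : Nat.gcd a b ≤ f := Nat.le_of_dvd hf hg
      have hlcm0 : 0 < Nat.lcm a b :=
        Nat.pos_of_ne_zero (Nat.lcm_ne_zero (by omega) (by omega))
      have hlcmR : (0:ℝ) < (Nat.lcm a b : ℝ) := by exact_mod_cast hlcm0
      have h1 : ((((Finset.Icc 1 N).filter (fun n => a ∣ n ∧ b ∣ n + f)).card : ℝ))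
          ≤ ((N / Nat.lcm a b + 1 : ℕ) : ℝ) := by exact_mod_cast count_le N f a b
      refine h1.trans ?_
      push_cast
      have h2 : ((N / Nat.lcm a b : ℕ) : ℝ) ≤ (N : ℝ) / (Nat.lcm a b : ℝ) :=
        Nat.cast_div_le
      have h3 : (N : ℝ) / (Nat.lcm a b : ℝ) ≤ (N : ℝ) * f / (a * b) := by
      -- a*b = gcd*lcm ≤ f*lcm
        have hab : (a * b : ℕ) ≤ f * Nat.lcm a b := by
          rw [← Nat.gcd_mul_lcm a b]
          exact Nat.mul_le_mul_right _ hgle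
        have habR : (a:ℝ) * b ≤ (f:ℝ) * (Nat.lcm a b) := by exact_mod_cast hab
        rw [div_le_div_iff₀ hlcmR (by positivity)]
        have hN0 : (0:ℝ) ≤ N := Nat.cast_nonneg N
        nlinarith
      linarith
  -- Put together in ℝ
  set H : ℝ := ∑ a ∈ I, (a:ℝ)⁻¹ with hH
  have hH0 : 0 ≤ H := Finset.sum_nonneg fun a _ => by positivity
  have hsum : ∑ a ∈ I, ∑ b ∈ I, ((N : ℝ) * f / (a * b) + 1)
      = (N : ℝ) * f * (H * H) + (M : ℝ) * M := by
    have hcard : (I.card : ℝ) = M := by rw [hI, Nat.card_Icc]; push_cast; ring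
    calc ∑ a ∈ I, ∑ b ∈ I, ((N : ℝ) * f / (a * b) + 1)
        = ∑ a ∈ I, (((N : ℝ) * f * ((a:ℝ)⁻¹ * H)) + M) := by
          refine Finset.sum_congr rfl fun a _ => ?_
          rw [Finset.sum_add_distrib, Finset.sum_const, nsmul_eq_mul, mul_one, hcard]
          congr 1
          rw [hH, Finset.mul_sum, Finset.mul_sum]
          refine Finset.sum_congr rfl fun b _ => ?_
          rw [div_eq_mul_inv, mul_inv]
          try ring
      _ = (N : ℝ) * f * (H * H) + (M : ℝ) * M := by
          rw [Finset.sum_add_distrib, Finset.sum_const, nsmul_eq_mul, hcard]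
          congr 1
          rw [← Finset.mul_sum, ← Finset.sum_mul, ← hH]
          try ring
  -- harmonic bound
  have hM1 : 1 ≤ M := by
    rw [hMdef]
    exact Nat.sqrt_pos.mpr (by omega)
  have hHlog : H ≤ 1 + Real.log M := by
    have := harmonic_le_one_add_log M
    have heq : (harmonic M : ℝ) = H := by
      rw [hH, hI]
      simp only [harmonic_eq_sum_Icc, Rat.cast_sum, Rat.cast_inv, Rat.cast_natCast]
    rw [heq] at this
    linarith
  -- log M ≤ log (f+1) + L
  have hMle : (M : ℝ) ≤ ((f:ℝ) + 1) * N := by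
    have h1 : M ≤ N + f := le_trans (Nat.sqrt_le_self _) (le_refl _)
    have h2 : (M : ℝ) ≤ (N : ℝ) + f := by exact_mod_cast h1
    have h3 : (f:ℝ) ≤ (f:ℝ) * N := by
      have : (1:ℝ) ≤ N := by exact_mod_cast (by omega : 1 ≤ N)
      nlinarith [(Nat.cast_nonneg f : (0:ℝ) ≤ (f:ℝ))]
    nlinarith
  have hlogM : Real.log M ≤ Real.log (f + 1) + L := by
    have hMpos : (0:ℝ) < M := by exact_mod_cast hM1
    have h1 : Real.log M ≤ Real.log (((f:ℝ) + 1) * N) := Real.log_le_log hMpos hMle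
    rw [Real.log_mul (by positivity) (by positivity : (N:ℝ) ≠ 0)] at h1
    rw [hLdef]
    exact h1
  have hHc : H ≤ c₁ * L := by
    have : 1 + Real.log M ≤ c₁ * L := by
      rw [hc₁]
      nlinarith
    linarith
  have hMM : (M : ℝ) * M ≤ ((f:ℝ) + 1) * N := by
    have h1 : M * M ≤ N + f := by
      have h := Nat.sqrt_le' (N + f)
      rw [pow_two] at h
      exact h
    have h2 : ((M:ℝ)) * M ≤ (N : ℝ) + f := by exact_mod_cast h1
    have h3 : (f:ℝ) ≤ (f:ℝ) * N := by
      have : (1:ℝ) ≤ N := by exact_mod_cast (by omega : 1 ≤ N)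
      nlinarith [(Nat.cast_nonneg f : (0:ℝ) ≤ (f:ℝ))]
    nlinarith
  -- final chain
  have hcast : (∑ n ∈ Finset.Icc 1 N, ((n.divisors.card : ℝ) * ((n + f).divisors.card : ℝ)))
      = ((∑ n ∈ Finset.Icc 1 N, n.divisors.card * (n + f).divisors.card : ℕ) : ℝ) := by
    push_cast
    ring
  rw [hcast]
  have hstep1R : ((∑ n ∈ Finset.Icc 1 N, n.divisors.card * (n + f).divisors.card : ℕ) : ℝ)
      ≤ 4 * ∑ a ∈ I, ∑ b ∈ I,
          ((((Finset.Icc 1 N).filter (fun n => a ∣ n ∧ b ∣ n + f)).card : ℝ)) := by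
    have := step1
    calc ((∑ n ∈ Finset.Icc 1 N, n.divisors.card * (n + f).divisors.card : ℕ) : ℝ)
        ≤ ((4 * ∑ a ∈ I, ∑ b ∈ I,
            ((Finset.Icc 1 N).filter (fun n => a ∣ n ∧ b ∣ n + f)).card : ℕ) : ℝ) := by
          exact_mod_cast this
      _ = _ := by push_cast; ring
  refine hstep1R.trans ?_
  have hstep2R : ∑ a ∈ I, ∑ b ∈ I,
        ((((Finset.Icc 1 N).filter (fun n => a ∣ n ∧ b ∣ n + f)).card : ℝ))
      ≤ (N : ℝ) * f * (H * H) + (M : ℝ) * M := by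
    rw [← hsum]
    exact Finset.sum_le_sum fun a ha => Finset.sum_le_sum fun b hb => step2 a ha b hb
  have hNpos : (0:ℝ) ≤ N := Nat.cast_nonneg N
  have hf0 : (0:ℝ) ≤ f := Nat.cast_nonneg f
  have hHH : H * H ≤ (c₁ * L) * (c₁ * L) :=
    mul_le_mul hHc hHc hH0 (by positivity)
  have hMM2 : (M : ℝ) * M ≤ 4 * ((f:ℝ) + 1) * N * L ^ 2 := by
    have h1 : (1:ℝ) ≤ (2 * L) * (2 * L) := by
      have h := mul_le_mul h2L h2L zero_le_one (by linarith)
      linarith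
    calc (M : ℝ) * M ≤ ((f:ℝ) + 1) * N := hMM
      _ ≤ ((f:ℝ) + 1) * N * ((2 * L) * (2 * L)) :=
          le_mul_of_one_le_right (by positivity) h1
      _ = 4 * ((f:ℝ) + 1) * N * L ^ 2 := by ring
  calc (4:ℝ) * ∑ a ∈ I, ∑ b ∈ I,
        ((((Finset.Icc 1 N).filter (fun n => a ∣ n ∧ b ∣ n + f)).card : ℝ))
      ≤ 4 * ((N : ℝ) * f * (H * H) + (M : ℝ) * M) := by linarith
    _ ≤ 4 * ((N : ℝ) * f * (c₁ ^ 2 * L ^ 2) + 4 * ((f:ℝ) + 1) * N * L ^ 2) := by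
        have : (N:ℝ) * f * (H * H) ≤ (N:ℝ) * f * (c₁ ^ 2 * L ^ 2) := by
          have h := mul_le_mul_of_nonneg_left hHH (mul_nonneg hNpos hf0)
          calc (N:ℝ) * f * (H * H) ≤ (N:ℝ) * f * ((c₁ * L) * (c₁ * L)) := h
            _ = (N:ℝ) * f * (c₁ ^ 2 * L ^ 2) := by ring
        linarith
    _ = (4 * f * c₁ ^ 2 + 16 * ((f:ℝ) + 1)) * N * L ^ 2 := by ring
end
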